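/- Let d_S = d_A = 2, fix q = 1/2 and a utility u with u(0) = 0 such that Z = u((ε₂ − ε₁)/2) − u(−(ε₂ − ε₁)/2) = 0, and set X = u(ε₂ − ε₁), Y = u(ε₂ − ε₁) − u(−(ε₂ − ε₁)); assume 2X > Y > 0. For the Werner state ρ_SA = ((1 − z)/4) I₄ + z |ψ⟩⟨ψ| with |ψ⟩ = (|ε₁⟩⊗|0⟩ + |ε₂⟩⊗|1⟩)/√2 and z ∈ [0,1], the maximum daemonic gain satisfies δ𝓤(ρ_SA) = 0 if z ≤ z₀ := 2X/Y − 1, and δ𝓤(ρ_SA) > 0 if z > z₀. -/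
import Mathlib


open Matrix BigOperators Finset Kronecker
open scoped ComplexOrder

noncomputable section

namespace Daemonic

/-- The outer product `|x⟩⟨y|` as a matrix. -/
def ketbra {ι : Type*} [Fintype ι] (x y : ι → ℂ) : Matrix ι ι ℂ :=
  Matrix.vecMulVec x (star y)

/-- A family of vectors is orthonormal. -/
def ONFam {ι κ : Type*} [Fintype ι] [DecidableEq κ] (v : κ → ι → ℂ) : Prop :=
  ∀ i j, star (v i) ⬝ᵥ v j = if i = j then 1 else 0

/-- A density matrix: positive semidefinite with unit trace. -/
def IsDensity {ι : Type*} [Fintype ι] (ρ : Matrix ι ι ℂ) : Prop :=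
  ρ.PosSemidef ∧ ρ.trace = 1

/-- The matrix element `⟨x|M|y⟩`. -/
def matElem {ι : Type*} [Fintype ι] (M : Matrix ι ι ℂ) (x y : ι → ℂ) : ℂ :=
  star x ⬝ᵥ (M *ᵥ y)

/-- The Hamiltonian `H_S = ∑ₖ εₖ |εₖ⟩⟨εₖ|`. -/
def ham {n : ℕ} (ε : Fin n → ℝ) (v : Fin n → Fin n → ℂ) : Matrix (Fin n) (Fin n) ℂ :=
  ∑ k, (ε k : ℂ) • ketbra (v k) (v k)

/-- `e^{t H_S} = ∑ₖ e^{t εₖ} |εₖ⟩⟨εₖ|` (functional calculus in the eigenbasis of `H_S`). -/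
def expHam {n : ℕ} (ε : Fin n → ℝ) (v : Fin n → Fin n → ℂ) (t : ℝ) :
    Matrix (Fin n) (Fin n) ℂ :=
  ∑ k, (Real.exp (t * ε k) : ℂ) • ketbra (v k) (v k)

/-- The expected utility `⟨u(w)⟩_{ρ,U}` for quasiprobability parameter `q`,
with respect to the eigenvalues `ε` and orthonormal eigenvectors `v` of `H_S`. -/
def expUtil {n : ℕ} (u : ℝ → ℝ) (q : ℝ) (ε : Fin n → ℝ) (v : Fin n → Fin n → ℂ)
    (ρ U : Matrix (Fin n) (Fin n) ℂ) : ℝ :=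
  ∑ i, ∑ j, ∑ k,
    (matElem ρ (v i) (v j) * matElem Uᴴ (v j) (v k) * matElem U (v k) (v i)).re *
      u (q * ε i + (1 - q) * ε j - ε k)

/-- The optimal expected utility `𝓤(ρ) = max over unitaries U of ⟨u(w)⟩_{ρ,U}`. -/
def optUtil {n : ℕ} (u : ℝ → ℝ) (q : ℝ) (ε : Fin n → ℝ) (v : Fin n → Fin n → ℂ)
    (ρ : Matrix (Fin n) (Fin n) ℂ) : ℝ :=
  ⨆ U : Matrix.unitaryGroup (Fin n) ℂ, expUtil u q ε v ρ (U : Matrix (Fin n) (Fin n) ℂ)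

/-- The exponential utility `u(w) = (1 - e^{-r w})/r`. -/
def expUtility (r : ℝ) : ℝ → ℝ := fun w => (1 - Real.exp (-r * w)) / r

/-- The partial trace over the ancilla. -/
def ptraceA {dS dA : ℕ} (ρSA : Matrix (Fin dS × Fin dA) (Fin dS × Fin dA) ℂ) :
    Matrix (Fin dS) (Fin dS) ℂ :=
  Matrix.of fun i j => ∑ a, ρSA (i, a) (j, a)

/-- The unnormalized conditional state `Tr_A((I ⊗ Π_a) ρ_SA (I ⊗ Π_a))`, where
`Π_a = |a⟩⟨a|` projects onto the vector `w a` of an orthonormal basis `w` of the ancilla. -/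
def condUnnorm {dS dA : ℕ} (w : Fin dA → Fin dA → ℂ)
    (ρSA : Matrix (Fin dS × Fin dA) (Fin dS × Fin dA) ℂ) (a : Fin dA) :
    Matrix (Fin dS) (Fin dS) ℂ :=
  Matrix.of fun i j => ∑ c, ∑ d, ρSA (i, c) (j, d) * (w a d * star (w a c))

/-- The outcome probability `p_a = Tr((I ⊗ Π_a) ρ_SA)`. -/
def prob {dS dA : ℕ} (w : Fin dA → Fin dA → ℂ)
    (ρSA : Matrix (Fin dS × Fin dA) (Fin dS × Fin dA) ℂ) (a : Fin dA) : ℝ :=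
  ((condUnnorm w ρSA a).trace).re

/-- The conditional state `ρ_{S|a}`. -/
def condState {dS dA : ℕ} (w : Fin dA → Fin dA → ℂ)
    (ρSA : Matrix (Fin dS × Fin dA) (Fin dS × Fin dA) ℂ) (a : Fin dA) :
    Matrix (Fin dS) (Fin dS) ℂ :=
  ((prob w ρSA a : ℂ))⁻¹ • condUnnorm w ρSA a

/-- The daemonic expected utility `𝓤_{{Π_a}}(ρ_SA) = ∑_a p_a 𝓤(ρ_{S|a})`. -/
def daemonicUtil {dS dA : ℕ} (u : ℝ → ℝ) (q : ℝ) (ε : Fin dS → ℝ)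
    (v : Fin dS → Fin dS → ℂ) (w : Fin dA → Fin dA → ℂ)
    (ρSA : Matrix (Fin dS × Fin dA) (Fin dS × Fin dA) ℂ) : ℝ :=
  ∑ a, prob w ρSA a * optUtil u q ε v (condState w ρSA a)

/-- The maximum daemonic gain `δ𝓤(ρ_SA)`, maximizing over all orthonormal bases of the
ancilla (equivalently, over the rows of all unitary matrices). -/
def daemonicGain {dS dA : ℕ} (u : ℝ → ℝ) (q : ℝ) (ε : Fin dS → ℝ)
    (v : Fin dS → Fin dS → ℂ)
    (ρSA : Matrix (Fin dS × Fin dA) (Fin dS × Fin dA) ℂ) : ℝ :=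
  (⨆ V : Matrix.unitaryGroup (Fin dA) ℂ,
      daemonicUtil u q ε v (fun a => (V : Matrix (Fin dA) (Fin dA) ℂ) a) ρSA) -
    optUtil u q ε v (ptraceA ρSA)

/-- The ergotropy of a (possibly unnormalized) state `σ` with respect to a Hamiltonian `H`:
`ℰ_H(σ) = max over unitaries U of (Tr(Hσ) - Tr(H U σ U†))`. -/
def ergotropyH {n : ℕ} (H σ : Matrix (Fin n) (Fin n) ℂ) : ℝ :=
  ⨆ U : Matrix.unitaryGroup (Fin n) ℂ,
    ((H * σ).trace -
      (H * ((U : Matrix (Fin n) (Fin n) ℂ) * σ * (U : Matrix (Fin n) (Fin n) ℂ)ᴴ)).trace).re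

/-- A separable bipartite state: a convex combination of product states. -/
def IsSeparable {dS dA : ℕ} (ρSA : Matrix (Fin dS × Fin dA) (Fin dS × Fin dA) ℂ) : Prop :=
  ∃ (m : ℕ) (p : Fin m → ℝ) (σ : Fin m → Matrix (Fin dS) (Fin dS) ℂ)
    (τ : Fin m → Matrix (Fin dA) (Fin dA) ℂ),
    (∀ k, 0 ≤ p k) ∧ (∑ k, p k = 1) ∧ (∀ k, IsDensity (σ k)) ∧ (∀ k, IsDensity (τ k)) ∧
    ρSA = ∑ k, (p k : ℂ) • (σ k ⊗ₖ τ k)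

/-- A classical-quantum state `ρ_SA = ∑ₖ pₖ Pₖ ⊗ ρᴬₖ` with `Pₖ` mutually orthogonal
rank-one projectors summing to the identity. -/
def IsClassicalQuantum {dS dA : ℕ}
    (ρSA : Matrix (Fin dS × Fin dA) (Fin dS × Fin dA) ℂ) : Prop :=
  ∃ (p : Fin dS → ℝ) (ψ : Fin dS → Fin dS → ℂ) (τ : Fin dS → Matrix (Fin dA) (Fin dA) ℂ),
    (∀ k, 0 ≤ p k) ∧ (∑ k, p k = 1) ∧ ONFam ψ ∧ (∀ k, IsDensity (τ k)) ∧
    ρSA = ∑ k, (p k : ℂ) • (ketbra (ψ k) (ψ k) ⊗ₖ τ k)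

/-- The dephasing map associated with an orthonormal basis `v`. -/
def dephase {n : ℕ} (v : Fin n → Fin n → ℂ) (ρ : Matrix (Fin n) (Fin n) ℂ) :
    Matrix (Fin n) (Fin n) ℂ :=
  ∑ k, ketbra (v k) (v k) * ρ * ketbra (v k) (v k)

lemma matElem_add {ι : Type*} [Fintype ι] (A B : Matrix ι ι ℂ) (x y : ι → ℂ) :
    matElem (A + B) x y = matElem A x y + matElem B x y := by
  simp [matElem, Matrix.add_mulVec, dotProduct_add]

lemma matElem_smul {ι : Type*} [Fintype ι] (c : ℂ) (A : Matrix ι ι ℂ) (x y : ι → ℂ) :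
    matElem (c • A) x y = c * matElem A x y := by
  simp [matElem, Matrix.smul_mulVec, dotProduct_smul]

lemma matElem_one {ι : Type*} [Fintype ι] [DecidableEq ι] (x y : ι → ℂ) :
    matElem (1 : Matrix ι ι ℂ) x y = star x ⬝ᵥ y := by
  simp [matElem]

lemma matElem_ketbra {ι : Type*} [Fintype ι] (x y p q : ι → ℂ) :
    matElem (ketbra x y) p q = (star p ⬝ᵥ x) * (star y ⬝ᵥ q) := by
  simp only [matElem, ketbra, Matrix.mulVec, dotProduct, Matrix.vecMulVec_apply,
    Pi.star_apply, Finset.sum_mul, Finset.mul_sum]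
  rw [Finset.sum_comm]
  apply Finset.sum_congr rfl; intro i _
  apply Finset.sum_congr rfl; intro j _
  ring

lemma matElem_conjTranspose {ι : Type*} [Fintype ι] (A : Matrix ι ι ℂ) (x y : ι → ℂ) :
    matElem Aᴴ x y = star (matElem A y x) := by
  simp only [matElem, Matrix.mulVec, dotProduct, Matrix.conjTranspose_apply,
    Pi.star_apply, star_sum, star_mul', star_star, Finset.mul_sum]
  rw [Finset.sum_comm]
  apply Finset.sum_congr rfl; intro i _
  apply Finset.sum_congr rfl; intro j _
  ring

lemma complete {v : Fin 2 → Fin 2 → ℂ} (hv : ONFam v) :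
    ketbra (v 0) (v 0) + ketbra (v 1) (v 1) = 1 := by
  have h : (Matrix.of fun i k => v k i)ᴴ * (Matrix.of fun i k => v k i) = 1 := by
    ext i j
    have := hv i j
    simp only [dotProduct, Pi.star_apply, Fin.sum_univ_two, Complex.star_def] at this
    simpa [Matrix.mul_apply, Matrix.conjTranspose_apply, Matrix.one_apply,
      Fin.sum_univ_two] using this
  have h2 := mul_eq_one_comm.mp h
  ext i j
  have := congrFun (congrFun h2 i) j
  simpa [Matrix.mul_apply, Matrix.conjTranspose_apply, Fin.sum_univ_two, ketbra,
    Matrix.vecMulVec_apply] using this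

lemma matElem_mul_ketbra_mul (A B : Matrix (Fin 2) (Fin 2) ℂ) (p q x y : Fin 2 → ℂ) :
    matElem (A * ketbra p q * B) x y = matElem A x p * matElem B q y := by
  simp only [matElem, ketbra, Matrix.mulVec, Matrix.mul_apply, dotProduct,
    Matrix.vecMulVec_apply, Fin.sum_univ_two, Pi.star_apply]
  ring

lemma matElem_mul_two {v : Fin 2 → Fin 2 → ℂ} (hv : ONFam v) (A B : Matrix (Fin 2) (Fin 2) ℂ)
    (x y : Fin 2 → ℂ) :
    matElem (A * B) x y =
      matElem A x (v 0) * matElem B (v 0) y + matElem A x (v 1) * matElem B (v 1) y := by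
  have hc := complete hv
  have hAB : A * B = A * ketbra (v 0) (v 0) * B + A * ketbra (v 1) (v 1) * B := by
    rw [← add_mul, ← mul_add, hc, mul_one]
  rw [hAB, matElem_add, matElem_mul_ketbra_mul, matElem_mul_ketbra_mul]


-- normSq relation: for U unitary, normSq(U₁₀) = normSq(U₀₁) and column sums
lemma unitary_normSq {v : Fin 2 → Fin 2 → ℂ} (hv : ONFam v) {U : Matrix (Fin 2) (Fin 2) ℂ}
    (hU : U ∈ Matrix.unitaryGroup (Fin 2) ℂ) :
    Complex.normSq (matElem U (v 0) (v 0)) + Complex.normSq (matElem U (v 1) (v 0)) = 1 ∧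
    Complex.normSq (matElem U (v 0) (v 1)) = Complex.normSq (matElem U (v 1) (v 0)) := by
  have h1 : Uᴴ * U = 1 := by
    have := (Unitary.mem_iff.mp hU).1
    rwa [Matrix.star_eq_conjTranspose] at this
  have h2 : U * Uᴴ = 1 := by
    have := (Unitary.mem_iff.mp hU).2
    rwa [Matrix.star_eq_conjTranspose] at this
  have e1 : matElem (Uᴴ * U) (v 0) (v 0) = 1 := by
    rw [h1, matElem_one]; simpa using hv 0 0
  have e2 : matElem (U * Uᴴ) (v 0) (v 0) = 1 := by
    rw [h2, matElem_one]; simpa using hv 0 0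
  rw [matElem_mul_two hv] at e1 e2
  rw [matElem_conjTranspose, matElem_conjTranspose] at e1
  rw [matElem_conjTranspose, matElem_conjTranspose] at e2
  simp only [Complex.star_def] at e1 e2
  rw [← Complex.normSq_eq_conj_mul_self, ← Complex.normSq_eq_conj_mul_self] at e1
  rw [Complex.mul_conj, Complex.mul_conj] at e2
  constructor
  · exact_mod_cast e1
  · have e1' : Complex.normSq (matElem U (v 0) (v 0)) + Complex.normSq (matElem U (v 1) (v 0)) = 1 := by
      exact_mod_cast e1
    have e2' : Complex.normSq (matElem U (v 0) (v 0)) + Complex.normSq (matElem U (v 0) (v 1)) = 1 := by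
      exact_mod_cast e2
    linarith

lemma expUtil_eq (u : ℝ → ℝ) (hu0 : u 0 = 0) (ε : Fin 2 → ℝ)
    (hZ : u ((ε 1 - ε 0) / 2) = u (-((ε 1 - ε 0) / 2)))
    {v : Fin 2 → Fin 2 → ℂ} (hv : ONFam v) (ρ : Matrix (Fin 2) (Fin 2) ℂ)
    {U : Matrix (Fin 2) (Fin 2) ℂ} (hU : U ∈ Matrix.unitaryGroup (Fin 2) ℂ) :
    expUtil u (1/2) ε v ρ U =
      Complex.normSq (matElem U (v 1) (v 0)) *
        ((matElem ρ (v 1) (v 1)).re * u (ε 1 - ε 0) +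
         (matElem ρ (v 0) (v 0)).re * u (ε 0 - ε 1)) := by
  have h1 : Uᴴ * U = 1 := by
    have := (Unitary.mem_iff.mp hU).1
    rwa [Matrix.star_eq_conjTranspose] at this
  -- off diagonal kills
  have hA : matElem Uᴴ (v 1) (v 0) * matElem U (v 0) (v 0)
      + matElem Uᴴ (v 1) (v 1) * matElem U (v 1) (v 0) = 0 := by
    have := matElem_mul_two hv Uᴴ U (v 1) (v 0)
    rw [h1, matElem_one] at this
    rw [← this]; simpa using hv 1 0
  have hB : matElem Uᴴ (v 0) (v 0) * matElem U (v 0) (v 1)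
      + matElem Uᴴ (v 0) (v 1) * matElem U (v 1) (v 1) = 0 := by
    have := matElem_mul_two hv Uᴴ U (v 0) (v 1)
    rw [h1, matElem_one] at this
    rw [← this]; simpa using hv 0 1
  have hAre : (matElem ρ (v 0) (v 1) * matElem Uᴴ (v 1) (v 0) * matElem U (v 0) (v 0)).re
      + (matElem ρ (v 0) (v 1) * matElem Uᴴ (v 1) (v 1) * matElem U (v 1) (v 0)).re = 0 := by
    have h := congrArg Complex.re (congrArg (fun t => matElem ρ (v 0) (v 1) * t) hA)
    simpa [mul_add, mul_assoc, Complex.add_re] using h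
  have hBre : (matElem ρ (v 1) (v 0) * matElem Uᴴ (v 0) (v 0) * matElem U (v 0) (v 1)).re
      + (matElem ρ (v 1) (v 0) * matElem Uᴴ (v 0) (v 1) * matElem U (v 1) (v 1)).re = 0 := by
    have h := congrArg Complex.re (congrArg (fun t => matElem ρ (v 1) (v 0) * t) hB)
    simpa [mul_add, mul_assoc, Complex.add_re] using h
  -- diagonal values
  have hd0 : (matElem ρ (v 0) (v 0) * matElem Uᴴ (v 0) (v 1) * matElem U (v 1) (v 0)).re
      = Complex.normSq (matElem U (v 1) (v 0)) * (matElem ρ (v 0) (v 0)).re := by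
    rw [matElem_conjTranspose, mul_assoc, Complex.star_def, ← Complex.normSq_eq_conj_mul_self]
    simp [Complex.mul_re, Complex.ofReal_re, Complex.ofReal_im]
    ring
  have hd1 : (matElem ρ (v 1) (v 1) * matElem Uᴴ (v 1) (v 0) * matElem U (v 0) (v 1)).re
      = Complex.normSq (matElem U (v 1) (v 0)) * (matElem ρ (v 1) (v 1)).re := by
    rw [matElem_conjTranspose, mul_assoc, Complex.star_def, ← Complex.normSq_eq_conj_mul_self]
    rw [(unitary_normSq hv hU).2]
    simp [Complex.mul_re, Complex.ofReal_re, Complex.ofReal_im]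
    ring
  unfold expUtil
  simp only [Fin.sum_univ_two]
  rw [show (1:ℝ)/2 * ε 0 + (1 - 1/2) * ε 0 - ε 0 = 0 by ring]
  rw [show (1:ℝ)/2 * ε 0 + (1 - 1/2) * ε 0 - ε 1 = -(ε 1 - ε 0) by ring]
  rw [show (1:ℝ)/2 * ε 0 + (1 - 1/2) * ε 1 - ε 0 = (ε 1 - ε 0)/2 by ring]
  rw [show (1:ℝ)/2 * ε 0 + (1 - 1/2) * ε 1 - ε 1 = -((ε 1 - ε 0)/2) by ring]
  rw [show (1:ℝ)/2 * ε 1 + (1 - 1/2) * ε 0 - ε 0 = (ε 1 - ε 0)/2 by ring]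
  rw [show (1:ℝ)/2 * ε 1 + (1 - 1/2) * ε 0 - ε 1 = -((ε 1 - ε 0)/2) by ring]
  rw [show (1:ℝ)/2 * ε 1 + (1 - 1/2) * ε 1 - ε 0 = ε 1 - ε 0 by ring]
  rw [show (1:ℝ)/2 * ε 1 + (1 - 1/2) * ε 1 - ε 1 = 0 by ring]
  rw [show -(ε 1 - ε 0) = ε 0 - ε 1 by ring, ← hZ, hu0]
  linear_combination u ((ε 1 - ε 0)/2) * hAre + u ((ε 1 - ε 0)/2) * hBre + u (ε 0 - ε 1) * hd0
    + u (ε 1 - ε 0) * hd1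


lemma swap_mem {v : Fin 2 → Fin 2 → ℂ} (hv : ONFam v) :
    ketbra (v 0) (v 1) + ketbra (v 1) (v 0) ∈ Matrix.unitaryGroup (Fin 2) ℂ := by
  have hvE : ∀ k l : Fin 2, (starRingEnd ℂ) (v k 0) * v l 0 + (starRingEnd ℂ) (v k 1) * v l 1
      = if k = l then 1 else 0 := by
    intro k l
    simpa [dotProduct, Fin.sum_univ_two, Complex.star_def] using hv k l
  have hcv := complete hv
  have hcvE : ∀ i j : Fin 2, v 0 i * (starRingEnd ℂ) (v 0 j) + v 1 i * (starRingEnd ℂ) (v 1 j)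
      = (1 : Matrix (Fin 2) (Fin 2) ℂ) i j := by
    intro i j
    have := congrFun (congrFun hcv i) j
    simpa [ketbra, Matrix.vecMulVec_apply, Complex.star_def] using this
  have hstar : star (ketbra (v 0) (v 1) + ketbra (v 1) (v 0))
      = ketbra (v 0) (v 1) + ketbra (v 1) (v 0) := by
    ext i j
    simp [Matrix.star_apply, ketbra, Matrix.vecMulVec_apply, Complex.star_def,
      map_add, _root_.map_mul]
    ring
  rw [Matrix.mem_unitaryGroup_iff, hstar]
  ext i j
  simp only [Matrix.mul_apply, Matrix.add_apply, ketbra, Matrix.vecMulVec_apply,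
    Fin.sum_univ_two, Pi.star_apply, Complex.star_def]
  have h00 := hvE 0 0
  have h01 := hvE 0 1
  have h10 := hvE 1 0
  have h11 := hvE 1 1
  have hc := hcvE i j
  norm_num [Fin.ext_iff] at h00 h01 h10 h11
  linear_combination v 0 i * (starRingEnd ℂ) (v 1 j) * h10 + v 0 i * (starRingEnd ℂ) (v 0 j) * h11
    + v 1 i * (starRingEnd ℂ) (v 1 j) * h00 + v 1 i * (starRingEnd ℂ) (v 0 j) * h01 + hc

lemma optUtil_eq (u : ℝ → ℝ) (hu0 : u 0 = 0) (ε : Fin 2 → ℝ)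
    (hZ : u ((ε 1 - ε 0) / 2) = u (-((ε 1 - ε 0) / 2)))
    {v : Fin 2 → Fin 2 → ℂ} (hv : ONFam v) (ρ : Matrix (Fin 2) (Fin 2) ℂ) :
    optUtil u (1/2) ε v ρ =
      max ((matElem ρ (v 1) (v 1)).re * u (ε 1 - ε 0) +
           (matElem ρ (v 0) (v 0)).re * u (ε 0 - ε 1)) 0 := by
  haveI : Nonempty (Matrix.unitaryGroup (Fin 2) ℂ) := ⟨1⟩
  set K := (matElem ρ (v 1) (v 1)).re * u (ε 1 - ε 0) +
           (matElem ρ (v 0) (v 0)).re * u (ε 0 - ε 1) with hK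
  have hval : ∀ U : Matrix.unitaryGroup (Fin 2) ℂ,
      expUtil u (1/2) ε v ρ (U : Matrix (Fin 2) (Fin 2) ℂ)
        = Complex.normSq (matElem (U : Matrix (Fin 2) (Fin 2) ℂ) (v 1) (v 0)) * K :=
    fun U => expUtil_eq u hu0 ε hZ hv ρ U.2
  have hub : ∀ U : Matrix.unitaryGroup (Fin 2) ℂ,
      expUtil u (1/2) ε v ρ (U : Matrix (Fin 2) (Fin 2) ℂ) ≤ max K 0 := by
    intro U
    rw [hval U]
    have h1 := (unitary_normSq hv U.2).1
    have h2 := Complex.normSq_nonneg (matElem (U : Matrix (Fin 2) (Fin 2) ℂ) (v 0) (v 0))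
    have h3 := Complex.normSq_nonneg (matElem (U : Matrix (Fin 2) (Fin 2) ℂ) (v 1) (v 0))
    rcases le_or_gt 0 K with hK0 | hK0
    · refine le_trans ?_ (le_max_left _ _)
      nlinarith
    · refine le_trans ?_ (le_max_right _ _)
      nlinarith
  have hbdd : BddAbove (Set.range fun U : Matrix.unitaryGroup (Fin 2) ℂ =>
      expUtil u (1/2) ε v ρ (U : Matrix (Fin 2) (Fin 2) ℂ)) := by
    refine ⟨max K 0, ?_⟩
    rintro x ⟨U, rfl⟩
    exact hub U
  apply le_antisymm
  · exact ciSup_le hub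
  · rw [max_le_iff]
    constructor
    · have := le_ciSup hbdd (⟨_, swap_mem hv⟩ : Matrix.unitaryGroup (Fin 2) ℂ)
      refine le_trans ?_ this
      rw [hval]
      have : matElem (ketbra (v 0) (v 1) + ketbra (v 1) (v 0)) (v 1) (v 0) = 1 := by
        rw [matElem_add, matElem_ketbra, matElem_ketbra, hv 1 0, hv 1 1, hv 0 0]
        norm_num
      simp [this]
    · have := le_ciSup hbdd (1 : Matrix.unitaryGroup (Fin 2) ℂ)
      refine le_trans ?_ this
      rw [hval]
      have h0 : matElem (1 : Matrix (Fin 2) (Fin 2) ℂ) (v 1) (v 0) = 0 := by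
        rw [matElem_one, hv 1 0]; norm_num
      simp [h0]


set_option maxHeartbeats 3200000

/-- for the Werner state `ρ_SA = ((1-z)/4) I₄ + z |ψ⟩⟨ψ|`,
`|ψ⟩ = (|ε₁⟩⊗|0⟩ + |ε₂⟩⊗|1⟩)/√2`, an incoherent utility (`Z = 0`) with `2X > Y > 0`:
`δ𝓤(ρ_SA) = 0` if `z ≤ z₀ = 2X/Y - 1`, and `δ𝓤(ρ_SA) > 0` if `z > z₀`. -/
theorem stmt14 (u : ℝ → ℝ) (hu0 : u 0 = 0)
    (ε : Fin 2 → ℝ) (hε : ε 0 < ε 1)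
    (v : Fin 2 → Fin 2 → ℂ) (hv : ONFam v)
    (b : Fin 2 → Fin 2 → ℂ) (hb : ONFam b)
    (hZ : u ((ε 1 - ε 0)/2) - u (-((ε 1 - ε 0)/2)) = 0)
    (X Y : ℝ) (hX : X = u (ε 1 - ε 0)) (hY : Y = u (ε 1 - ε 0) - u (-(ε 1 - ε 0)))
    (hY0 : 0 < Y) (hXY : Y < 2 * X)
    (z : ℝ) (hz : z ∈ Set.Icc (0:ℝ) 1)
    (ψ : Fin 2 × Fin 2 → ℂ)
    (hψ : ψ = fun x => (v 0 x.1 * b 0 x.2 + v 1 x.1 * b 1 x.2) / (Real.sqrt 2 : ℂ))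
    (ρSA : Matrix (Fin 2 × Fin 2) (Fin 2 × Fin 2) ℂ)
    (hρSA : ρSA = (((1 - z)/4 : ℝ) : ℂ) • (1 : Matrix (Fin 2 × Fin 2) (Fin 2 × Fin 2) ℂ) +
      (z : ℂ) • ketbra ψ ψ) :
    (z ≤ 2 * X / Y - 1 → daemonicGain u (1/2) ε v ρSA = 0) ∧
    (2 * X / Y - 1 < z → 0 < daemonicGain u (1/2) ε v ρSA) := by
  haveI : Nonempty (Matrix.unitaryGroup (Fin 2) ℂ) := ⟨1⟩
  have hY2 : (0:ℝ) < X := by linarith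
  have huM : u (ε 0 - ε 1) = X - Y := by
    rw [show ε 0 - ε 1 = -(ε 1 - ε 0) by ring]; linarith
  have hZ' : u ((ε 1 - ε 0) / 2) = u (-((ε 1 - ε 0) / 2)) := by linarith
  -- scalar forms of orthonormality
  have hvE : ∀ k l : Fin 2, (starRingEnd ℂ) (v k 0) * v l 0 + (starRingEnd ℂ) (v k 1) * v l 1
      = if k = l then 1 else 0 := by
    intro k l; simpa [dotProduct, Fin.sum_univ_two, Complex.star_def] using hv k l
  have hbE : ∀ k l : Fin 2, (starRingEnd ℂ) (b k 0) * b l 0 + (starRingEnd ℂ) (b k 1) * b l 1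
      = if k = l then 1 else 0 := by
    intro k l; simpa [dotProduct, Fin.sum_univ_two, Complex.star_def] using hb k l
  have hcvE : ∀ i j : Fin 2, v 0 i * (starRingEnd ℂ) (v 0 j) + v 1 i * (starRingEnd ℂ) (v 1 j)
      = if i = j then 1 else 0 := by
    intro i j
    have := congrFun (congrFun (complete hv) i) j
    simpa [ketbra, Matrix.vecMulVec_apply, Complex.star_def, Matrix.one_apply] using this
  have hcbE : ∀ i j : Fin 2, b 0 i * (starRingEnd ℂ) (b 0 j) + b 1 i * (starRingEnd ℂ) (b 1 j)
      = if i = j then 1 else 0 := by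
    intro i j
    have := congrFun (congrFun (complete hb) i) j
    simpa [ketbra, Matrix.vecMulVec_apply, Complex.star_def, Matrix.one_apply] using this
  have hs2 : ((Real.sqrt 2 : ℝ) : ℂ) * ((Real.sqrt 2 : ℝ) : ℂ) = 2 := by
    rw [← Complex.ofReal_mul, Real.mul_self_sqrt (by norm_num : (0:ℝ) ≤ 2)]
    norm_num
  have hρ' : ρSA = (((1 - z)/4 : ℝ) : ℂ) • 1 +
      ((z/2 : ℝ) : ℂ) • ketbra (fun x => v 0 x.1 * b 0 x.2 + v 1 x.1 * b 1 x.2)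
        (fun x => v 0 x.1 * b 0 x.2 + v 1 x.1 * b 1 x.2) := by
    rw [hρSA]
    congr 1
    ext x y
    simp only [ketbra, Matrix.vecMulVec_apply, Matrix.smul_apply, smul_eq_mul, hψ,
      Pi.star_apply, Complex.star_def, map_div₀, map_add, _root_.map_mul, Complex.conj_ofReal]
    rw [div_mul_div_comm, hs2]
    push_cast
    ring
  -- partial trace is maximally mixed
  have hptr : ptraceA ρSA = ((1/2 : ℝ) : ℂ) • 1 := by
    ext i j
    simp only [ptraceA, Matrix.of_apply, hρ', Matrix.add_apply, Matrix.smul_apply,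
      smul_eq_mul, ketbra, Matrix.vecMulVec_apply, Fin.sum_univ_two, Matrix.one_apply,
      Prod.mk.injEq, Pi.star_apply, Complex.star_def, map_add, _root_.map_mul, and_true]
    have h00 := hbE 0 0
    have h01 := hbE 0 1
    have h10 := hbE 1 0
    have h11 := hbE 1 1
    norm_num at h00 h01 h10 h11
    have hc := hcvE i j
    rcases eq_or_ne i j with rfl | hij
    · simp only [if_pos rfl, eq_self_iff_true, if_true] at hc ⊢
      push_cast
      linear_combination ((z:ℂ)/2 * (v 0 i * (starRingEnd ℂ) (v 0 i))) * h00
        + ((z:ℂ)/2 * (v 0 i * (starRingEnd ℂ) (v 1 i))) * h10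
        + ((z:ℂ)/2 * (v 1 i * (starRingEnd ℂ) (v 0 i))) * h01
        + ((z:ℂ)/2 * (v 1 i * (starRingEnd ℂ) (v 1 i))) * h11
        + ((z:ℂ)/2) * hc
    · simp only [if_neg hij] at hc ⊢
      push_cast
      linear_combination ((z:ℂ)/2 * (v 0 i * (starRingEnd ℂ) (v 0 j))) * h00
        + ((z:ℂ)/2 * (v 0 i * (starRingEnd ℂ) (v 1 j))) * h10
        + ((z:ℂ)/2 * (v 1 i * (starRingEnd ℂ) (v 0 j))) * h01
        + ((z:ℂ)/2 * (v 1 i * (starRingEnd ℂ) (v 1 j))) * h11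
        + ((z:ℂ)/2) * hc
  have hoptS : optUtil u (1/2) ε v (ptraceA ρSA) = X - Y/2 := by
    rw [hptr, optUtil_eq u hu0 ε hZ' hv]
    have hm : ∀ m : Fin 2, (matElem (((1/2 : ℝ) : ℂ) • (1 : Matrix (Fin 2) (Fin 2) ℂ))
        (v m) (v m)).re = 1/2 := by
      intro m
      rw [matElem_smul, matElem_one, hv m m, if_pos rfl, mul_one]
      simp
    rw [hm 0, hm 1, ← hX, huM, max_eq_left (by linarith)]
    ring
  -- the per-measurement-basis computation
  have key : ∀ V : Matrix.unitaryGroup (Fin 2) ℂ,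
      ∃ s0 s1 : ℝ, 0 ≤ s0 ∧ 0 ≤ s1 ∧ s0 + s1 = 1 ∧
        s0 = Complex.normSq ((starRingEnd ℂ) ((V : Matrix (Fin 2) (Fin 2) ℂ) 0 0) * b 0 0 +
             (starRingEnd ℂ) ((V : Matrix (Fin 2) (Fin 2) ℂ) 0 1) * b 0 1) ∧
        daemonicUtil u (1/2) ε v (fun a => (V : Matrix (Fin 2) (Fin 2) ℂ) a) ρSA
          = 1/2 * max (X - ((1 - z)/2 + z * s0) * Y) 0
            + 1/2 * max (X - ((1 - z)/2 + z * s1) * Y) 0 := by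
    intro V
    set W : Matrix (Fin 2) (Fin 2) ℂ := (V : Matrix (Fin 2) (Fin 2) ℂ) with hW
    have hV1 : star W * W = 1 := (Unitary.mem_iff.mp V.2).1
    have hV2 : W * star W = 1 := (Unitary.mem_iff.mp V.2).2
    have hV1E : ∀ c d : Fin 2, (starRingEnd ℂ) (W 0 c) * W 0 d + (starRingEnd ℂ) (W 1 c) * W 1 d
        = if c = d then 1 else 0 := by
      intro c d
      have := congrFun (congrFun hV1 c) d
      simpa [Matrix.mul_apply, Matrix.star_apply, Fin.sum_univ_two, Matrix.one_apply,
        Complex.star_def] using this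
    have hV2E : ∀ a a' : Fin 2, W a 0 * (starRingEnd ℂ) (W a' 0) + W a 1 * (starRingEnd ℂ) (W a' 1)
        = if a = a' then 1 else 0 := by
      intro a a'
      have := congrFun (congrFun hV2 a) a'
      simpa [Matrix.mul_apply, Matrix.star_apply, Fin.sum_univ_two, Matrix.one_apply,
        Complex.star_def] using this
    -- the overlap coefficients
    set c : Fin 2 → Fin 2 → ℂ := fun a k =>
      (starRingEnd ℂ) (W a 0) * b k 0 + (starRingEnd ℂ) (W a 1) * b k 1 with hc
    -- conditional (unnormalized) states
    have hcond : ∀ a : Fin 2, condUnnorm (fun a => W a) ρSA a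
        = (((1 - z)/4 : ℝ) : ℂ) • 1 + ((z/2 : ℝ) : ℂ) •
          ketbra (fun i => c a 0 * v 0 i + c a 1 * v 1 i)
                 (fun i => c a 0 * v 0 i + c a 1 * v 1 i) := by
      intro a
      ext i j
      simp only [condUnnorm, Matrix.of_apply, hρ', Matrix.add_apply, Matrix.smul_apply,
        smul_eq_mul, ketbra, Matrix.vecMulVec_apply, Fin.sum_univ_two, Matrix.one_apply,
        Prod.mk.injEq, Pi.star_apply, Complex.star_def, map_add, _root_.map_mul, and_true, hc,
        Complex.conj_conj]
      have hna := hV2E a a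
      simp only [eq_self_iff_true, if_true] at hna
      rcases eq_or_ne i j with rfl | hij
      · simp only [eq_self_iff_true, if_true, true_and]
        push_cast
        linear_combination (((1:ℂ) - z)/4) * hna
      · simp only [if_neg hij, hij, false_and, if_false]
        push_cast
        ring
    -- traces and probabilities
    have hparsA : ∀ a : Fin 2, c a 0 * (starRingEnd ℂ) (c a 0) + c a 1 * (starRingEnd ℂ) (c a 1)
        = 1 := by
      intro a
      have hna := hV2E a a
      simp only [eq_self_iff_true, if_true] at hna
      have e00 := hcbE 0 0
      have e01 := hcbE 0 1
      have e10 := hcbE 1 0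
      have e11 := hcbE 1 1
      norm_num at e00 e01 e10 e11
      simp only [hc, map_add, _root_.map_mul, Complex.conj_conj]
      linear_combination ((starRingEnd ℂ) (W a 0) * W a 0) * e00
        + ((starRingEnd ℂ) (W a 0) * W a 1) * e01
        + ((starRingEnd ℂ) (W a 1) * W a 0) * e10
        + ((starRingEnd ℂ) (W a 1) * W a 1) * e11 + hna
    have hpars0 : c 0 0 * (starRingEnd ℂ) (c 0 0) + c 1 0 * (starRingEnd ℂ) (c 1 0) = 1 := by
      have e00 := hbE 0 0
      norm_num at e00
      have f00 := hV1E 0 0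
      have f01 := hV1E 0 1
      have f10 := hV1E 1 0
      have f11 := hV1E 1 1
      norm_num at f00 f01 f10 f11
      simp only [hc, map_add, _root_.map_mul, Complex.conj_conj]
      linear_combination (b 0 0 * (starRingEnd ℂ) (b 0 0)) * f00
        + (b 0 0 * (starRingEnd ℂ) (b 0 1)) * f01
        + (b 0 1 * (starRingEnd ℂ) (b 0 0)) * f10
        + (b 0 1 * (starRingEnd ℂ) (b 0 1)) * f11 + e00
    have htrk : ∀ a : Fin 2, (ketbra (fun i => c a 0 * v 0 i + c a 1 * v 1 i)
        (fun i => c a 0 * v 0 i + c a 1 * v 1 i)).trace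
        = c a 0 * (starRingEnd ℂ) (c a 0) + c a 1 * (starRingEnd ℂ) (c a 1) := by
      intro a
      have e00 := hvE 0 0
      have e01 := hvE 0 1
      have e10 := hvE 1 0
      have e11 := hvE 1 1
      norm_num at e00 e01 e10 e11
      simp only [Matrix.trace, Matrix.diag, ketbra, Matrix.vecMulVec_apply,
        Fin.sum_univ_two, Pi.star_apply, Complex.star_def, map_add, _root_.map_mul]
      linear_combination (c a 0 * (starRingEnd ℂ) (c a 0)) * e00
        + (c a 0 * (starRingEnd ℂ) (c a 1)) * e10
        + (c a 1 * (starRingEnd ℂ) (c a 0)) * e01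
        + (c a 1 * (starRingEnd ℂ) (c a 1)) * e11
    have hprob : ∀ a : Fin 2, prob (fun a => W a) ρSA a = 1/2 := by
      intro a
      have htr : (condUnnorm (fun a => W a) ρSA a).trace = ((1/2 : ℝ) : ℂ) := by
        rw [hcond a, Matrix.trace_add, Matrix.trace_smul, Matrix.trace_smul,
          Matrix.trace_one, htrk a, hparsA a]
        simp only [smul_eq_mul, Fintype.card_fin, Nat.cast_ofNat, mul_one]
        push_cast
        ring
      unfold prob
      rw [htr, Complex.ofReal_re]
    have hcondSt : ∀ a : Fin 2, condState (fun a => W a) ρSA a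
        = (2 : ℂ) • condUnnorm (fun a => W a) ρSA a := by
      intro a
      unfold condState
      rw [hprob a]
      norm_num
    -- matrix elements of the conditional states
    have hdot : ∀ a : Fin 2, ∀ m : Fin 2,
        (starRingEnd ℂ) (v m 0) * (c a 0 * v 0 0 + c a 1 * v 1 0)
          + (starRingEnd ℂ) (v m 1) * (c a 0 * v 0 1 + c a 1 * v 1 1)
        = c a 0 * (if m = 0 then 1 else 0) + c a 1 * (if m = 1 then 1 else 0) := by
      intro a m
      linear_combination (c a 0) * hvE m 0 + (c a 1) * hvE m 1
    have hket : ∀ a : Fin 2, ∀ m : Fin 2,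
        matElem (ketbra (fun i => c a 0 * v 0 i + c a 1 * v 1 i)
          (fun i => c a 0 * v 0 i + c a 1 * v 1 i)) (v m) (v m)
        = (c a 0 * (if m = 0 then 1 else 0) + c a 1 * (if m = 1 then 1 else 0)) *
          (starRingEnd ℂ) (c a 0 * (if m = 0 then 1 else 0) + c a 1 * (if m = 1 then 1 else 0)) := by
      intro a m
      rw [matElem_ketbra]
      have hsd : star (v m) ⬝ᵥ (fun i => c a 0 * v 0 i + c a 1 * v 1 i)
          = c a 0 * (if m = 0 then 1 else 0) + c a 1 * (if m = 1 then 1 else 0) := by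
        simp only [dotProduct, Fin.sum_univ_two, Pi.star_apply, Complex.star_def]
        exact hdot a m
      have hsd2 : star (fun i => c a 0 * v 0 i + c a 1 * v 1 i) ⬝ᵥ v m
          = (starRingEnd ℂ) (c a 0 * (if m = 0 then 1 else 0) + c a 1 * (if m = 1 then 1 else 0)) := by
        have h := congrArg (starRingEnd ℂ) (hdot a m)
        simp only [map_add, _root_.map_mul, Complex.conj_conj] at h
        simp only [dotProduct, Fin.sum_univ_two, Pi.star_apply, Complex.star_def,
          map_add, _root_.map_mul]
        linear_combination h
      rw [hsd, hsd2]
    have hmE : ∀ a : Fin 2, ∀ m : Fin 2,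
        (matElem (condState (fun a => W a) ρSA a) (v m) (v m)).re
          = (1 - z)/2 + z * Complex.normSq (c a m) := by
      intro a m
      have hcm : (c a 0 * (if m = 0 then 1 else 0) + c a 1 * (if m = 1 then 1 else 0)) = c a m := by
        fin_cases m <;> norm_num
      rw [hcondSt a, matElem_smul, hcond a, matElem_add, matElem_smul, matElem_smul,
        matElem_one, hv m m, if_pos rfl, hket a m, hcm, Complex.mul_conj]
      rw [show ((2:ℂ) * ((((1 - z)/4 : ℝ):ℂ) * 1 + (((z/2 : ℝ)):ℂ) * ((Complex.normSq (c a m) : ℝ) : ℂ)))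
          = (((1 - z)/2 + z * Complex.normSq (c a m) : ℝ) : ℂ) by push_cast; ring]
      rw [Complex.ofReal_re]
    -- real Parseval relations
    have hnormA : ∀ a : Fin 2, Complex.normSq (c a 0) + Complex.normSq (c a 1) = 1 := by
      intro a
      have h := hparsA a
      rw [Complex.mul_conj, Complex.mul_conj] at h
      exact_mod_cast h
    have hnorm0 : Complex.normSq (c 0 0) + Complex.normSq (c 1 0) = 1 := by
      have h := hpars0
      rw [Complex.mul_conj, Complex.mul_conj] at h
      exact_mod_cast h
    -- optimal utility of conditional states
    have hoptC : ∀ a : Fin 2, optUtil u (1/2) ε v (condState (fun a => W a) ρSA a)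
        = max (X - ((1 - z)/2 + z * Complex.normSq (c a 0)) * Y) 0 := by
      intro a
      rw [optUtil_eq u hu0 ε hZ' hv, hmE a 1, hmE a 0, ← hX, huM]
      congr 1
      linear_combination (X * z) * hnormA a
    refine ⟨Complex.normSq (c 0 0), Complex.normSq (c 1 0), Complex.normSq_nonneg _,
      Complex.normSq_nonneg _, hnorm0, by rw [hc], ?_⟩
    unfold daemonicUtil
    rw [Fin.sum_univ_two, hprob 0, hprob 1, hoptC 0, hoptC 1]
  -- boundedness of daemonic utilities
  have hbddV : BddAbove (Set.range fun V : Matrix.unitaryGroup (Fin 2) ℂ =>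
      daemonicUtil u (1/2) ε v (fun a => (V : Matrix (Fin 2) (Fin 2) ℂ) a) ρSA) := by
    refine ⟨X, ?_⟩
    rintro x ⟨V, rfl⟩
    obtain ⟨s0, s1, hs0, hs1, hsum, -, hdU⟩ := key V
    dsimp only
    rw [hdU]
    rcases hz with ⟨hz0, hz1⟩
    have q0 : 0 ≤ ((1 - z)/2 + z * s0) * Y :=
      mul_nonneg (by nlinarith [mul_nonneg hz0 hs0]) hY0.le
    have q1 : 0 ≤ ((1 - z)/2 + z * s1) * Y :=
      mul_nonneg (by nlinarith [mul_nonneg hz0 hs1]) hY0.le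
    have h0 : max (X - ((1 - z)/2 + z * s0) * Y) 0 ≤ X := max_le (by linarith) hY2.le
    have h1 : max (X - ((1 - z)/2 + z * s1) * Y) 0 ≤ X := max_le (by linarith) hY2.le
    linarith
  constructor
  · intro hle
    have hzy : (1 + z) * Y ≤ 2 * X := by
      have h1 : z + 1 ≤ 2 * X / Y := by linarith
      have := (le_div_iff₀ hY0).mp h1
      linarith
    have hconst : ∀ V : Matrix.unitaryGroup (Fin 2) ℂ,
        daemonicUtil u (1/2) ε v (fun a => (V : Matrix (Fin 2) (Fin 2) ℂ) a) ρSA = X - Y/2 := by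
      intro V
      obtain ⟨s0, s1, hs0, hs1, hsum, -, hdU⟩ := key V
      rcases hz with ⟨hz0, hz1⟩
      have hs0le : s0 ≤ 1 := by linarith
      have hs1le : s1 ≤ 1 := by linarith
      have k0 : 0 ≤ X - ((1 - z)/2 + z * s0) * Y := by
        nlinarith [mul_nonneg (mul_nonneg hz0 (by linarith : (0:ℝ) ≤ 1 - s0)) hY0.le]
      have k1 : 0 ≤ X - ((1 - z)/2 + z * s1) * Y := by
        nlinarith [mul_nonneg (mul_nonneg hz0 (by linarith : (0:ℝ) ≤ 1 - s1)) hY0.le]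
      rw [hdU, max_eq_left k0, max_eq_left k1]
      linear_combination (-(Y*z)/2) * hsum
    unfold daemonicGain
    rw [iSup_congr hconst, ciSup_const, hoptS]
    ring
  · intro hlt
    have hzy : 2 * X < (1 + z) * Y := by
      have h1 : 2 * X / Y < z + 1 := by linarith
      have := (div_lt_iff₀ hY0).mp h1
      linarith
    rcases hz with ⟨hz0, hz1⟩
    have hsup : 1/2 * (X - ((1 - z)/2 + z * 0) * Y) + 1/2 * 0 ≤
        ⨆ V : Matrix.unitaryGroup (Fin 2) ℂ,
          daemonicUtil u (1/2) ε v (fun a => (V : Matrix (Fin 2) (Fin 2) ℂ) a) ρSA := by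
      have hK0 : 0 ≤ X - ((1 - z)/2 + z * 0) * Y := by
        nlinarith [mul_nonneg hz0 hY0.le]
      have hK1 : X - ((1 - z)/2 + z * 1) * Y ≤ 0 := by nlinarith
      set M0 : Matrix (Fin 2) (Fin 2) ℂ := Matrix.of
        (fun i j => if j = 0 then (starRingEnd ℂ) (b i 1) else -((starRingEnd ℂ) (b i 0))) with hM0
      have hM0mem : M0 ∈ Matrix.unitaryGroup (Fin 2) ℂ := by
        rw [Matrix.mem_unitaryGroup_iff]
        ext a a'
        simp only [Matrix.mul_apply, Matrix.star_apply, Fin.sum_univ_two, hM0,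
          Matrix.of_apply, Matrix.one_apply, Complex.star_def, map_neg, Complex.conj_conj]
        norm_num
        rcases eq_or_ne a a' with rfl | hne
        · have e := hbE a a
          rw [if_pos rfl] at e ⊢
          linear_combination e
        · have e := hbE a a'
          rw [if_neg hne] at e ⊢
          linear_combination e
      obtain ⟨s0, s1, hs0, hs1, hsum, hs0def, hdU⟩ := key ⟨M0, hM0mem⟩
      have hs00 : s0 = 0 := by
        rw [hs0def]
        have hval : (starRingEnd ℂ)
              (((⟨M0, hM0mem⟩ : Matrix.unitaryGroup (Fin 2) ℂ) : Matrix (Fin 2) (Fin 2) ℂ) 0 0) * b 0 0 +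
            (starRingEnd ℂ)
              (((⟨M0, hM0mem⟩ : Matrix.unitaryGroup (Fin 2) ℂ) : Matrix (Fin 2) (Fin 2) ℂ) 0 1) * b 0 1 = 0 := by
          show (starRingEnd ℂ) (M0 0 0) * b 0 0 + (starRingEnd ℂ) (M0 0 1) * b 0 1 = 0
          simp only [hM0, Matrix.of_apply, map_neg, Complex.conj_conj]
          norm_num
          ring
        rw [hval]
        simp
      have hs11 : s1 = 1 := by linear_combination hsum - hs00
      rw [hs00, hs11, max_eq_left hK0, max_eq_right hK1] at hdU
      have hle2 := le_ciSup hbddV (⟨M0, hM0mem⟩ : Matrix.unitaryGroup (Fin 2) ℂ)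
      rw [hdU] at hle2
      exact hle2
    unfold daemonicGain
    rw [hoptS]
    linarith [hsup]

end Daemonic
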